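/- Let (γ, ν₁, ν₂) : I → ℝ³ × ℝ³ × ℝ³ and (γ̃, ν̃₁, ν̃₂) : J → ℝ³ × ℝ³ × ℝ³ be framed curves with frame matrix T = (t_ij), and let x(u,v) = γ(u) + γ̃(v) be their translation surface. Suppose there exists a smooth θ : I × J → ℝ such that t₃₂(u,v)·cos θ(u,v) + t₃₁(u,v)·sin θ(u,v) = 0 for all (u,v). Define n(u,v) = sin θ(u,v)·ν₁(u) + cos θ(u,v)·ν₂(u) and μ(u,v) = ν₁(u) × ν₂(u). Then (x, n, μ) : I × J → ℝ³ × ℝ³ × ℝ³ is a framed surface; that is, |n| = |μ| = 1, n·μ = 0, and x_u·n = 0 and x_v·n = 0 on all of I × J. -/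
import Mathlib


open Matrix Real

noncomputable section

abbrev V3 : Type := Fin 3 → ℝ

def cross3 (a b : V3) : V3 := crossProduct a b

def mu3 (nu1 nu2 : ℝ → V3) (t : ℝ) : V3 := cross3 (nu1 t) (nu2 t)

/-- A framed curve on a set `I`. -/
def IsFramedCurve (I : Set ℝ) (g nu1 nu2 : ℝ → V3) : Prop :=
  ContDiffOn ℝ (⊤ : ℕ∞) g I ∧ ContDiffOn ℝ (⊤ : ℕ∞) nu1 I ∧ ContDiffOn ℝ (⊤ : ℕ∞) nu2 I ∧
  ∀ t ∈ I, nu1 t ⬝ᵥ nu1 t = 1 ∧ nu2 t ⬝ᵥ nu2 t = 1 ∧ nu1 t ⬝ᵥ nu2 t = 0 ∧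
    deriv g t ⬝ᵥ nu1 t = 0 ∧ deriv g t ⬝ᵥ nu2 t = 0

def curvL (nu1 nu2 : ℝ → V3) (t : ℝ) : ℝ := deriv nu1 t ⬝ᵥ nu2 t
def curvM (nu1 nu2 : ℝ → V3) (t : ℝ) : ℝ := deriv nu1 t ⬝ᵥ mu3 nu1 nu2 t
def curvN (nu1 nu2 : ℝ → V3) (t : ℝ) : ℝ := deriv nu2 t ⬝ᵥ mu3 nu1 nu2 t
def curvA (g nu1 nu2 : ℝ → V3) (t : ℝ) : ℝ := deriv g t ⬝ᵥ mu3 nu1 nu2 t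

/-- Frame matrix of two framed curves. -/
def frameMatrix (nu1 nu2 w1 w2 : ℝ → V3) (u v : ℝ) : Matrix (Fin 3) (Fin 3) ℝ :=
  Matrix.of fun i j => ![w1 v, w2 v, mu3 w1 w2 v] i ⬝ᵥ ![nu1 u, nu2 u, mu3 nu1 nu2 u] j

def det3 (a b c : V3) : ℝ := Matrix.det (Matrix.of ![a, b, c])

def pduV (f : ℝ → ℝ → V3) (u v : ℝ) : V3 := deriv (fun u' => f u' v) u
def pdvV (f : ℝ → ℝ → V3) (u v : ℝ) : V3 := deriv (fun v' => f u v') v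
def pduS (f : ℝ → ℝ → ℝ) (u v : ℝ) : ℝ := deriv (fun u' => f u' v) u
def pdvS (f : ℝ → ℝ → ℝ) (u v : ℝ) : ℝ := deriv (fun v' => f u v') v

/-- `A`-equivalence of the germ of `f` at `p` with the germ of `g` at `0`. -/
def AEquivAt (f : ℝ × ℝ → V3) (p : ℝ × ℝ) (g : ℝ × ℝ → V3) : Prop :=
  ∃ (U : Set (ℝ × ℝ)) (W : Set V3) (φ φi : ℝ × ℝ → ℝ × ℝ) (Ψ Ψi : V3 → V3),
    IsOpen U ∧ p ∈ U ∧ IsOpen W ∧ f p ∈ W ∧ (∀ q ∈ U, f q ∈ W) ∧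
    IsOpen (φ '' U) ∧ IsOpen (Ψ '' W) ∧
    ContDiffOn ℝ (⊤ : ℕ∞) φ U ∧ ContDiffOn ℝ (⊤ : ℕ∞) φi (φ '' U) ∧
    (∀ q ∈ U, φi (φ q) = q) ∧ (∀ q ∈ φ '' U, φ (φi q) = q) ∧
    ContDiffOn ℝ (⊤ : ℕ∞) Ψ W ∧ ContDiffOn ℝ (⊤ : ℕ∞) Ψi (Ψ '' W) ∧
    (∀ y ∈ W, Ψi (Ψ y) = y) ∧ (∀ y ∈ Ψ '' W, Ψ (Ψi y) = y) ∧
    φ p = 0 ∧ Ψ (f p) = g 0 ∧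
    ∀ q ∈ U, Ψ (f q) = g (φ q)

def crossCapModel : ℝ × ℝ → V3 := fun p => ![p.1, p.1 * p.2, p.2 ^ 2]
def S1PlusModel : ℝ × ℝ → V3 := fun p => ![p.1, p.2 ^ 2, p.2 * (p.1 ^ 2 + p.2 ^ 2)]
def S1MinusModel : ℝ × ℝ → V3 := fun p => ![p.1, p.2 ^ 2, p.2 * (p.1 ^ 2 - p.2 ^ 2)]
def cuspidalEdgeModel : ℝ × ℝ → V3 := fun p => ![p.1, p.2 ^ 2, p.2 ^ 3]
def swallowtailModel : ℝ × ℝ → V3 :=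
  fun p => ![p.1, 4 * p.2 ^ 3 + 2 * p.1 * p.2, 3 * p.2 ^ 4 + p.1 * p.2 ^ 2]
def cuspidalCrossCapModel : ℝ × ℝ → V3 := fun p => ![p.1, p.2 ^ 2, p.1 * p.2 ^ 3]
def D4PlusModel : ℝ × ℝ → V3 :=
  fun p => ![p.1 * p.2, p.1 ^ 2 + 3 * p.2 ^ 2, p.1 ^ 2 * p.2 + p.2 ^ 3]
def D4MinusModel : ℝ × ℝ → V3 :=
  fun p => ![p.1 * p.2, p.1 ^ 2 - 3 * p.2 ^ 2, p.1 ^ 2 * p.2 - p.2 ^ 3]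

def HasCrossCapAt (f : ℝ × ℝ → V3) (p : ℝ × ℝ) : Prop := AEquivAt f p crossCapModel
def HasS1PlusAt (f : ℝ × ℝ → V3) (p : ℝ × ℝ) : Prop := AEquivAt f p S1PlusModel
def HasS1MinusAt (f : ℝ × ℝ → V3) (p : ℝ × ℝ) : Prop := AEquivAt f p S1MinusModel
def HasCuspidalEdgeAt (f : ℝ × ℝ → V3) (p : ℝ × ℝ) : Prop := AEquivAt f p cuspidalEdgeModel
def HasSwallowtailAt (f : ℝ × ℝ → V3) (p : ℝ × ℝ) : Prop := AEquivAt f p swallowtailModel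
def HasCuspidalCrossCapAt (f : ℝ × ℝ → V3) (p : ℝ × ℝ) : Prop := AEquivAt f p cuspidalCrossCapModel
def HasD4PlusAt (f : ℝ × ℝ → V3) (p : ℝ × ℝ) : Prop := AEquivAt f p D4PlusModel
def HasD4MinusAt (f : ℝ × ℝ → V3) (p : ℝ × ℝ) : Prop := AEquivAt f p D4MinusModel

/-- A non-degenerate space curve parametrized by arc length on `I`. -/
def IsUnitSpeedNondeg (I : Set ℝ) (g : ℝ → V3) : Prop :=
  ContDiffOn ℝ (⊤ : ℕ∞) g I ∧ (∀ s ∈ I, deriv g s ⬝ᵥ deriv g s = 1) ∧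
  ∀ s ∈ I, deriv (deriv g) s ≠ 0

def fcurv (g : ℝ → V3) (s : ℝ) : ℝ := Real.sqrt (deriv (deriv g) s ⬝ᵥ deriv (deriv g) s)
def fnor (g : ℝ → V3) (s : ℝ) : V3 := (fcurv g s)⁻¹ • deriv (deriv g) s
def fbin (g : ℝ → V3) (s : ℝ) : V3 := cross3 (deriv g s) (fnor g s)
def ftor (g : ℝ → V3) (s : ℝ) : ℝ :=
  det3 (deriv g s) (deriv (deriv g) s) (deriv (deriv (deriv g)) s) / (fcurv g s) ^ 2

/-- Generalised framed surface on `U ⊆ ℝ²`. -/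
def IsGeneralisedFramedSurface (U : Set (ℝ × ℝ)) (x N1 N2 : ℝ × ℝ → V3) : Prop :=
  ContDiffOn ℝ (⊤ : ℕ∞) x U ∧ ContDiffOn ℝ (⊤ : ℕ∞) N1 U ∧ ContDiffOn ℝ (⊤ : ℕ∞) N2 U ∧
  (∀ p ∈ U, N1 p ⬝ᵥ N1 p = 1 ∧ N2 p ⬝ᵥ N2 p = 1 ∧ N1 p ⬝ᵥ N2 p = 0) ∧
  ∃ A B : ℝ × ℝ → ℝ, ContDiffOn ℝ (⊤ : ℕ∞) A U ∧ ContDiffOn ℝ (⊤ : ℕ∞) B U ∧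
    ∀ p ∈ U, cross3 (deriv (fun u => x (u, p.2)) p.1) (deriv (fun v => x (p.1, v)) p.2)
      = A p • N1 p + B p • N2 p

/-- Framed surface on `U ⊆ ℝ²`. -/
def IsFramedSurface (U : Set (ℝ × ℝ)) (x nn ss : ℝ × ℝ → V3) : Prop :=
  ContDiffOn ℝ (⊤ : ℕ∞) x U ∧ ContDiffOn ℝ (⊤ : ℕ∞) nn U ∧ ContDiffOn ℝ (⊤ : ℕ∞) ss U ∧
  ∀ p ∈ U, nn p ⬝ᵥ nn p = 1 ∧ ss p ⬝ᵥ ss p = 1 ∧ nn p ⬝ᵥ ss p = 0 ∧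
    deriv (fun u => x (u, p.2)) p.1 ⬝ᵥ nn p = 0 ∧ deriv (fun v => x (p.1, v)) p.2 ⬝ᵥ nn p = 0

/-- The vector field `η = -α̃(v) ∂/∂u + α(u) t₃₃(u,v) ∂/∂v` applied to a map `f`. -/
def etaD (g nu1 nu2 gt w1 w2 : ℝ → V3) (f : ℝ → ℝ → V3) (u v : ℝ) : V3 :=
  (-(curvA gt w1 w2 v)) • pduV f u v
    + (curvA g nu1 nu2 u * frameMatrix nu1 nu2 w1 w2 u v 2 2) • pdvV f u v

/-- `φ = det(ξx, ηx, ηηx)` for the translation surface `x(u,v) = γ(u) + γ̃(v)`. -/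
def phiD (g nu1 nu2 gt w1 w2 : ℝ → V3) (u v : ℝ) : ℝ :=
  det3 (pduV (fun a b => g a + gt b) u v)
    (etaD g nu1 nu2 gt w1 w2 (fun a b => g a + gt b) u v)
    (etaD g nu1 nu2 gt w1 w2 (etaD g nu1 nu2 gt w1 w2 (fun a b => g a + gt b)) u v)

/-- `n(u,v) = sin θ(u,v) ν₁(u) + cos θ(u,v) ν₂(u)`. -/
def nvecD (nu1 nu2 : ℝ → V3) (θ : ℝ → ℝ → ℝ) (u v : ℝ) : V3 :=
  Real.sin (θ u v) • nu1 u + Real.cos (θ u v) • nu2 u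

/-- `t = n × μ`. -/
def tvecD (nu1 nu2 : ℝ → V3) (θ : ℝ → ℝ → ℝ) (u v : ℝ) : V3 :=
  cross3 (nvecD nu1 nu2 θ u v) (mu3 nu1 nu2 u)

private lemma cross3_triple (a b c : V3) :
    cross3 (cross3 a b) c = (a ⬝ᵥ c) • b - (b ⬝ᵥ c) • a := by
  funext i
  fin_cases i <;>
    simp [cross3, cross_apply, dotProduct, Fin.sum_univ_three, Matrix.cons_val_zero,
      Matrix.cons_val_one, Matrix.head_cons] <;> ring

private lemma perp_decomp (a b z : V3) (ha : a ⬝ᵥ a = 1) (hb : b ⬝ᵥ b = 1)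
    (hab : a ⬝ᵥ b = 0) (hza : z ⬝ᵥ a = 0) (hzb : z ⬝ᵥ b = 0) :
    z = (z ⬝ᵥ cross3 a b) • cross3 a b := by
  have haz : a ⬝ᵥ z = 0 := by rwa [dotProduct_comm]
  have hbz : b ⬝ᵥ z = 0 := by rwa [dotProduct_comm]
  have h1 : cross3 (cross3 a b) z = 0 := by
    rw [cross3_triple, haz, hbz]; simp
  have h2 : cross3 (cross3 (cross3 a b) z) (cross3 a b)
      = (cross3 a b ⬝ᵥ cross3 a b) • z - (z ⬝ᵥ cross3 a b) • cross3 a b :=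
    cross3_triple _ _ _
  have hmm : cross3 a b ⬝ᵥ cross3 a b = 1 := by
    simp only [cross3]
    rw [cross_dot_cross, ha, hb, hab]; ring
  rw [h1, hmm, one_smul] at h2
  have h3 : cross3 (0 : V3) (cross3 a b) = 0 := by
    funext i
    fin_cases i <;> simp [cross3, cross_apply]
  rw [h3] at h2
  exact (sub_eq_zero.mp h2.symm)

private lemma cd_cross {U : Set (ℝ × ℝ)} {f h : ℝ × ℝ → V3}
    (hf : ContDiffOn ℝ (⊤ : ℕ∞) f U) (hh : ContDiffOn ℝ (⊤ : ℕ∞) h U) :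
    ContDiffOn ℝ (⊤ : ℕ∞) (fun p => cross3 (f p) (h p)) U := by
  have hfi := contDiffOn_pi.1 hf
  have hhi := contDiffOn_pi.1 hh
  rw [contDiffOn_pi]
  intro i
  fin_cases i <;>
    · simp only [cross3, cross_apply, Matrix.cons_val_zero, Matrix.cons_val_one,
        Matrix.head_cons, Matrix.cons_val_two, Matrix.tail_cons]
      exact ((hfi _).mul (hhi _)).sub ((hfi _).mul (hhi _))

/-- if `t₃₂ cos θ + t₃₁ sin θ = 0` then `(x, n, μ)` is a framed surface. -/
theorem translationSurface_framedSurface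
    (I J : Set ℝ) (hI : IsOpen I) (hIc : I.OrdConnected)
    (hJ : IsOpen J) (hJc : J.OrdConnected)
    (g nu1 nu2 gt w1 w2 : ℝ → V3)
    (hg : IsFramedCurve I g nu1 nu2) (hgt : IsFramedCurve J gt w1 w2)
    (θ : ℝ → ℝ → ℝ)
    (hθ : ContDiffOn ℝ (⊤ : ℕ∞) (fun p : ℝ × ℝ => θ p.1 p.2) (I ×ˢ J))
    (hθeq : ∀ u ∈ I, ∀ v ∈ J,
      frameMatrix nu1 nu2 w1 w2 u v 2 1 * Real.cos (θ u v)
        + frameMatrix nu1 nu2 w1 w2 u v 2 0 * Real.sin (θ u v) = 0) :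
    IsFramedSurface (I ×ˢ J) (fun p => g p.1 + gt p.2)
      (fun p => Real.sin (θ p.1 p.2) • nu1 p.1 + Real.cos (θ p.1 p.2) • nu2 p.1)
      (fun p => mu3 nu1 nu2 p.1) := by
  obtain ⟨hgs, hn1s, hn2s, hgf⟩ := hg
  obtain ⟨hgts, hw1s, hw2s, hgtf⟩ := hgt
  have hfst : ContDiff ℝ (⊤ : ℕ∞) (fun p : ℝ × ℝ => p.1) := contDiff_fst
  have hsnd : ContDiff ℝ (⊤ : ℕ∞) (fun p : ℝ × ℝ => p.2) := contDiff_snd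
  have hmapsI : ∀ p ∈ I ×ˢ J, (p : ℝ × ℝ).1 ∈ I := fun p hp => hp.1
  have hmapsJ : ∀ p ∈ I ×ˢ J, (p : ℝ × ℝ).2 ∈ J := fun p hp => hp.2
  have hnu1 : ContDiffOn ℝ (⊤ : ℕ∞) (fun p : ℝ × ℝ => nu1 p.1) (I ×ˢ J) :=
    hn1s.comp hfst.contDiffOn hmapsI
  have hnu2 : ContDiffOn ℝ (⊤ : ℕ∞) (fun p : ℝ × ℝ => nu2 p.1) (I ×ˢ J) :=
    hn2s.comp hfst.contDiffOn hmapsI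
  have hsin : ContDiffOn ℝ (⊤ : ℕ∞) (fun p : ℝ × ℝ => Real.sin (θ p.1 p.2)) (I ×ˢ J) :=
    Real.contDiff_sin.comp_contDiffOn hθ
  have hcos : ContDiffOn ℝ (⊤ : ℕ∞) (fun p : ℝ × ℝ => Real.cos (θ p.1 p.2)) (I ×ˢ J) :=
    Real.contDiff_cos.comp_contDiffOn hθ
  refine ⟨?_, ?_, ?_, ?_⟩
  · exact (hgs.comp hfst.contDiffOn hmapsI).add (hgts.comp hsnd.contDiffOn hmapsJ)
  · exact (hsin.smul hnu1).add (hcos.smul hnu2)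
  · exact cd_cross hnu1 hnu2
  · intro p hp
    obtain ⟨h11, h22, h12, hga, hgb⟩ := hgf p.1 hp.1
    obtain ⟨k11, k22, k12, hta, htb⟩ := hgtf p.2 hp.2
    set s := Real.sin (θ p.1 p.2) with hs
    set c := Real.cos (θ p.1 p.2) with hc
    have h21 : nu2 p.1 ⬝ᵥ nu1 p.1 = 0 := by rwa [dotProduct_comm]
    refine ⟨?_, ?_, ?_, ?_, ?_⟩
    · simp only [add_dotProduct, dotProduct_add, smul_dotProduct, dotProduct_smul,
        smul_eq_mul, h11, h22, h12, h21]
      nlinarith [Real.sin_sq_add_cos_sq (θ p.1 p.2)]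
    · simp only [mu3, cross3]
      rw [cross_dot_cross, h11, h22, h12]; ring
    · simp only [mu3, cross3, add_dotProduct, smul_dotProduct, smul_eq_mul,
        dot_self_cross, dot_cross_self]
      ring
    · have hd : deriv (fun u => g u + gt p.2) p.1 = deriv g p.1 := deriv_add_const _
      rw [hd]
      simp only [dotProduct_add, dotProduct_smul, smul_eq_mul, hga, hgb]
      ring
    · have hd : deriv (fun v => g p.1 + gt v) p.2 = deriv gt p.2 := by
        simp only [deriv_const_add]
      rw [hd]
      have hz := perp_decomp (w1 p.2) (w2 p.2) (deriv gt p.2) k11 k22 k12 hta htb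
      rw [hz]
      simp only [smul_dotProduct, dotProduct_add, dotProduct_smul, smul_eq_mul]
      have h31 : cross3 (w1 p.2) (w2 p.2) ⬝ᵥ nu1 p.1
          = frameMatrix nu1 nu2 w1 w2 p.1 p.2 2 0 := by
        simp [frameMatrix, mu3]
      have h32 : cross3 (w1 p.2) (w2 p.2) ⬝ᵥ nu2 p.1
          = frameMatrix nu1 nu2 w1 w2 p.1 p.2 2 1 := by
        simp [frameMatrix, mu3]
      rw [h31, h32]
      have := hθeq p.1 hp.1 p.2 hp.2
      rw [← hs, ← hc] at this
      linear_combination (deriv gt p.2 ⬝ᵥ cross3 (w1 p.2) (w2 p.2)) * this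

end
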